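/- arXiv:math/0209097 — 6 statements merged into one kernel-verified Lean document; each statement's English description precedes it below -/
import Mathlib

section
/- Let f be holomorphic on a neighborhood of z₀ ∈ ℂ, and suppose z₀ is a zero of order n−1 of f′ (with n ≥ 2). Then there exist holomorphic local diffeomorphisms φ and ψ defined near f(z₀) and z₀ respectively, with φ(0) = f(z₀) and ψ(z₀) = 0, such that f = φ ∘ (w ↦ wⁿ) ∘ ψ on a neighborhood of z₀. -/
open Filter Topology

theorem stmt_0 (f : ℂ → ℂ) (z₀ : ℂ) (n : ℕ) (hn : 2 ≤ n)
    (hf : AnalyticAt ℂ f z₀)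
    (hzero : ∀ k, 1 ≤ k → k < n → iteratedDeriv k f z₀ = 0)
    (hne : iteratedDeriv n f z₀ ≠ 0) :
    ∃ φ ψ : ℂ → ℂ, AnalyticAt ℂ φ 0 ∧ AnalyticAt ℂ ψ z₀ ∧
      φ 0 = f z₀ ∧ ψ z₀ = 0 ∧ deriv φ 0 ≠ 0 ∧ deriv ψ z₀ ≠ 0 ∧
      ∀ᶠ z in 𝓝 z₀, f z = φ ((ψ z) ^ n) := by
  set F : ℂ → ℂ := fun z => f z - f z₀ with hFdef
  have hF : AnalyticAt ℂ F z₀ := hf.sub analyticAt_const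
  obtain ⟨q, hq⟩ := hF
  obtain ⟨r, hr⟩ := hq
  have hq' : HasFPowerSeriesAt F q z₀ := ⟨r, hr⟩
  -- iterated derivatives of F agree with those of f for k ≥ 1
  have hFd : ∀ k, 1 ≤ k → iteratedDeriv k F z₀ = iteratedDeriv k f z₀ := by
    intro k hk
    obtain ⟨m, rfl⟩ := Nat.exists_eq_add_of_le hk
    rw [add_comm, iteratedDeriv_succ', iteratedDeriv_succ']
    congr 1
    funext z
    exact deriv_sub_const _
  -- coefficients of q
  have hcoeff : ∀ k, (Nat.factorial k) • q.coeff k = iteratedDeriv k F z₀ := by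
    intro k
    have := hr.factorial_smul (1 : ℂ) k
    rwa [iteratedDeriv_eq_iteratedFDeriv]
  have hqzero : ∀ k, k < n → q k = 0 := by
    intro k hk
    rw [← FormalMultilinearSeries.coeff_eq_zero]
    rcases Nat.eq_zero_or_pos k with h0 | h1
    · subst h0
      have := hq'.coeff_zero 1
      simpa [hFdef] using this
    · have h := hcoeff k
      rw [hFd k h1, hzero k h1 hk] at h
      have hfac : ((Nat.factorial k : ℂ)) ≠ 0 := Nat.cast_ne_zero.mpr k.factorial_ne_zero
      have : ((Nat.factorial k : ℂ)) * q.coeff k = 0 := by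
        simpa [nsmul_eq_mul] using h
      exact (mul_eq_zero.mp this).resolve_left hfac
  have hqn : q n ≠ 0 := by
    rw [Ne, ← FormalMultilinearSeries.coeff_eq_zero]
    intro h
    have h2 := hcoeff n
    rw [h, hFd n (by omega)] at h2
    exact hne (by simpa using h2.symm)
  have hqne : q ≠ 0 := fun h => hqn (by simp [h])
  have horder : q.order = n := by
    apply le_antisymm
    · exact Nat.sInf_le hqn
    · exact le_csInf ⟨n, hqn⟩ fun m hm => not_lt.mp fun hlt => hm (hqzero m hlt)
  -- factorization F z = (z - z₀)^n • g z
  set g : ℂ → ℂ := (Function.swap dslope z₀)^[n] F with hgdef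
  have hg_an : AnalyticAt ℂ g z₀ := ⟨_, hq'.has_fpower_series_iterate_dslope_fslope n⟩
  have hg_ne : g z₀ ≠ 0 := by
    have := hq'.iterate_dslope_fslope_ne_zero hqne
    rwa [horder] at this
  have hF_eq : ∀ᶠ z in 𝓝 z₀, F z = (z - z₀) ^ n • g z := by
    have := hq'.eq_pow_order_mul_iterate_dslope
    rw [horder] at this
    exact Filter.Eventually.of_forall this
  -- n-th root of g
  obtain ⟨c, hc⟩ := Complex.isAlgClosed.exists_pow_nat_eq (g z₀) (n := n) (by omega)
  have hc_ne : c ≠ 0 := by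
    intro h
    apply hg_ne
    rw [← hc, h, zero_pow (by omega)]
  set h : ℂ → ℂ := fun z => c * Complex.exp ((n : ℂ)⁻¹ * Complex.log (g z / g z₀)) with hhdef
  have hdiv : AnalyticAt ℂ (fun z => g z / g z₀) z₀ := hg_an.div analyticAt_const hg_ne
  have hlog : AnalyticAt ℂ (fun z => Complex.log (g z / g z₀)) z₀ := by
    apply hdiv.clog
    simp only [div_self hg_ne]
    exact Complex.one_mem_slitPlane
  have hh_an : AnalyticAt ℂ h z₀ :=
    analyticAt_const.mul (analyticAt_const.mul hlog).cexp
  have hh_z₀ : h z₀ = c := by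
    simp [hhdef, div_self hg_ne, Complex.log_one]
  have hh_pow : ∀ z, g z ≠ 0 → h z ^ n = g z := by
    intro z hz
    have hu : g z / g z₀ ≠ 0 := div_ne_zero hz hg_ne
    have hn0 : (n : ℂ) ≠ 0 := Nat.cast_ne_zero.mpr (by omega)
    calc h z ^ n = c ^ n * Complex.exp ((n : ℂ)⁻¹ * Complex.log (g z / g z₀)) ^ n := by
          rw [hhdef]; ring
      _ = g z₀ * Complex.exp ((n : ℂ) * ((n : ℂ)⁻¹ * Complex.log (g z / g z₀))) := by
          rw [hc, Complex.exp_nat_mul]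
      _ = g z₀ * (g z / g z₀) := by
          rw [← mul_assoc, mul_inv_cancel₀ hn0, one_mul, Complex.exp_log hu]
      _ = g z := by field_simp
  refine ⟨fun w => f z₀ + w, fun z => (z - z₀) * h z, analyticAt_const.add analyticAt_id,
    (analyticAt_id.sub analyticAt_const).mul hh_an, by simp, by simp, ?_, ?_, ?_⟩
  · have : HasDerivAt (fun w : ℂ => f z₀ + w) 1 0 := by
      simpa using (hasDerivAt_id (0:ℂ)).const_add (f z₀)
    rw [this.deriv]
    exact one_ne_zero
  · have hd : HasDerivAt (fun z => (z - z₀) * h z) (1 * h z₀ + (z₀ - z₀) * deriv h z₀) z₀ :=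
      ((hasDerivAt_id z₀).sub_const z₀).mul hh_an.differentiableAt.hasDerivAt
    rw [hd.deriv]
    simp [hh_z₀, hc_ne]
  · filter_upwards [hF_eq, hg_an.continuousAt.eventually_ne hg_ne] with z hz hgz
    have hz' : f z - f z₀ = (z - z₀) ^ n * g z := by simpa [hFdef, smul_eq_mul] using hz
    rw [mul_pow, hh_pow z hgz]
    linear_combination hz'
end

section
/- Let F : ℝ² → ℝ² be a proper C¹ map with critical set C = {p : det DF(p) = 0}, and assume every fiber of F is finite. Then the function w ↦ card(F⁻¹(w)) is locally constant on ℝ² \ F(C); in particular it is constant on each connected component of ℝ² \ F(C). -/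
open Set


-- Inverse function theorem packaging: around a regular point there is an open
-- neighborhood on which F is injective and open images of open subsets.
theorem aux_ivt (F : ℝ × ℝ → ℝ × ℝ) (hC1 : ContDiff ℝ 1 F) (p : ℝ × ℝ)
    (hreg : LinearMap.det ((fderiv ℝ F p) : (ℝ × ℝ) →ₗ[ℝ] (ℝ × ℝ)) ≠ 0) :
    ∃ V : Set (ℝ × ℝ), IsOpen V ∧ p ∈ V ∧ InjOn F V ∧
      ∀ W ⊆ V, IsOpen W → IsOpen (F '' W) := by
  have hdet : (fderiv ℝ F p).det ≠ 0 := hreg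
  set A := (fderiv ℝ F p).toContinuousLinearEquivOfDetNeZero hdet with hA
  have hd : HasFDerivAt F ((A : (ℝ × ℝ) →L[ℝ] (ℝ × ℝ))) p := by
    rw [hA, ContinuousLinearMap.coe_toContinuousLinearEquivOfDetNeZero]
    exact (hC1.differentiable one_ne_zero p).hasFDerivAt
  set e := (hC1.contDiffAt).toOpenPartialHomeomorph F hd one_ne_zero with he
  have hcoe : (e : (ℝ × ℝ) → (ℝ × ℝ)) = F := rfl
  refine ⟨e.source, e.open_source,
    ContDiffAt.mem_toOpenPartialHomeomorph_source hC1.contDiffAt hd one_ne_zero, ?_, ?_⟩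
  · have := e.injOn
    rwa [hcoe] at this
  · intro W hW hWopen
    have : F '' W = e '' W := by rw [hcoe]
    rw [this]
    exact e.isOpen_image_of_subset_source hWopen hW

theorem aux_key (F : ℝ × ℝ → ℝ × ℝ) (hC1 : ContDiff ℝ 1 F)
    (hproper : ∀ K : Set (ℝ × ℝ), IsCompact K → IsCompact (F ⁻¹' K))
    (hfin : ∀ w : ℝ × ℝ, (F ⁻¹' {w}).Finite)
    (C : Set (ℝ × ℝ))
    (hC : C = {p : ℝ × ℝ | LinearMap.det ((fderiv ℝ F p) : (ℝ × ℝ) →ₗ[ℝ] (ℝ × ℝ)) = 0})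
    (w : ℝ × ℝ) (hw : w ∈ (F '' C)ᶜ) :
    ∃ U ∈ nhds w, ∀ w' ∈ U, Nat.card (F ⁻¹' {w'}) = Nat.card (F ⁻¹' {w}) := by
  have hFproper : IsProperMap F :=
    isProperMap_iff_isCompact_preimage.2 ⟨hC1.continuous, fun K hK => hproper K hK⟩
  set S := F ⁻¹' {w} with hSdef
  have hS : S.Finite := hfin w
  -- each point of the fiber is regular
  have hreg : ∀ p ∈ S, LinearMap.det ((fderiv ℝ F p) : (ℝ × ℝ) →ₗ[ℝ] (ℝ × ℝ)) ≠ 0 := by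
    intro p hp h0
    exact hw ⟨p, by rw [hC]; exact h0, hp⟩
  -- choose IFT neighborhoods
  have hV : ∀ p ∈ S, ∃ V : Set (ℝ × ℝ), IsOpen V ∧ p ∈ V ∧ InjOn F V ∧
      ∀ W ⊆ V, IsOpen W → IsOpen (F '' W) := fun p hp => aux_ivt F hC1 p (hreg p hp)
  choose! V hVopen hVmem hVinj hVimg using hV
  -- pairwise disjoint open neighborhoods
  obtain ⟨D, hD, hDdisj⟩ := hS.t2_separation
  set Wn : (ℝ × ℝ) → Set (ℝ × ℝ) := fun p => V p ∩ D p with hWn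
  have hWopen : ∀ p ∈ S, IsOpen (Wn p) := fun p hp => (hVopen p hp).inter (hD p).2
  have hWmem : ∀ p ∈ S, p ∈ Wn p := fun p hp => ⟨hVmem p hp, (hD p).1⟩
  have hWinj : ∀ p ∈ S, InjOn F (Wn p) := fun p hp => (hVinj p hp).mono inter_subset_left
  have hWimg : ∀ p ∈ S, IsOpen (F '' Wn p) := fun p hp =>
    hVimg p hp _ inter_subset_left (hWopen p hp)
  have hWdisj : ∀ p ∈ S, ∀ q ∈ S, p ≠ q → Disjoint (Wn p) (Wn q) := fun p hp q hq hpq =>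
    ((hDdisj hp hq hpq).mono inter_subset_right inter_subset_right)
  set T : Set (ℝ × ℝ) := ⋃ p ∈ S, Wn p with hT
  have hST : S ⊆ T := fun p hp => mem_biUnion hp (hWmem p hp)
  -- properness: away from T the image misses a neighborhood of w
  have hTopen : IsOpen T := isOpen_biUnion fun p hp => hWopen p hp
  have hclosed : IsClosed (F '' Tᶜ) := hFproper.isClosedMap _ hTopen.isClosed_compl
  have hwA : w ∉ F '' Tᶜ := by
    rintro ⟨x, hx, hFx⟩
    exact hx (hST (by simp [hSdef, hFx]))
  -- the good neighborhood
  set U : Set (ℝ × ℝ) := (F '' Tᶜ)ᶜ ∩ ⋂ p ∈ S, F '' Wn p with hU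
  have hUopen : IsOpen U := hclosed.isOpen_compl.inter (hS.isOpen_biInter hWimg)
  have hwU : w ∈ U := by
    refine ⟨hwA, mem_biInter fun p hp => ⟨p, hWmem p hp, ?_⟩⟩
    simpa [hSdef] using hp
  refine ⟨U, hUopen.mem_nhds hwU, fun w' hw' => ?_⟩
  -- choose for each p ∈ S the unique preimage of w' in Wn p
  have hx : ∀ p ∈ S, ∃ x, x ∈ Wn p ∧ F x = w' := by
    intro p hp
    obtain ⟨x, hxW, hxF⟩ := mem_iInter₂.1 hw'.2 p hp
    exact ⟨x, hxW, hxF⟩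
  choose! x hxW hxF using hx
  -- the fiber of w' is covered by T
  have hcov : F ⁻¹' {w'} ⊆ T := by
    intro y hy
    by_contra hyT
    exact hw'.1 ⟨y, hyT, hy⟩
  -- bijection from S to the fiber of w'
  have hbij : Function.Bijective (fun p : S => (⟨x p.1, by simp [hxF p.1 p.2]⟩ :
      F ⁻¹' {w'})) := by
    constructor
    · rintro ⟨p, hp⟩ ⟨q, hq⟩ hpq
      simp only [Subtype.mk_eq_mk] at hpq ⊢
      by_contra hne
      exact (hWdisj p hp q hq (by simpa using hne)).ne_of_mem (hxW p hp)
        (hpq ▸ hxW q hq) rfl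
    · rintro ⟨y, hy⟩
      obtain ⟨p, hp, hyW⟩ := mem_iUnion₂.1 (hcov hy)
      refine ⟨⟨p, hp⟩, ?_⟩
      simp only [Subtype.mk_eq_mk]
      exact hWinj p hp (hxW p hp) hyW (by rw [hxF p hp]; exact hy.symm)
  exact (Nat.card_eq_of_bijective _ hbij).symm

/-- For a proper `C¹` map `F : ℝ² → ℝ²` with finite fibers, the number of
preimages is locally constant on the complement of `F(C)`, where `C` is the set
of critical points; in particular it is constant on each connected component. -/
theorem stmt_8 (F : ℝ × ℝ → ℝ × ℝ) (hC1 : ContDiff ℝ 1 F)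
    (hproper : ∀ K : Set (ℝ × ℝ), IsCompact K → IsCompact (F ⁻¹' K))
    (hfin : ∀ w : ℝ × ℝ, (F ⁻¹' {w}).Finite)
    (C : Set (ℝ × ℝ))
    (hC : C = {p : ℝ × ℝ | LinearMap.det ((fderiv ℝ F p) : (ℝ × ℝ) →ₗ[ℝ] (ℝ × ℝ)) = 0}) :
    (∀ w ∈ (F '' C)ᶜ, ∃ U ∈ nhds w, ∀ w' ∈ U ∩ (F '' C)ᶜ,
        Nat.card (F ⁻¹' {w'}) = Nat.card (F ⁻¹' {w})) ∧
      ∀ w ∈ (F '' C)ᶜ, ∀ w' ∈ connectedComponentIn (F '' C)ᶜ w,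
        Nat.card (F ⁻¹' {w'}) = Nat.card (F ⁻¹' {w}) := by
  have key := aux_key F hC1 hproper hfin C hC
  constructor
  · intro w hw
    obtain ⟨U, hU, hUc⟩ := key w hw
    exact ⟨U, hU, fun w' hw' => hUc w' hw'.1⟩
  · intro w hw w' hw'
    -- use the locally constant function on the subtype
    set X := ((F '' C)ᶜ : Set (ℝ × ℝ)) with hX
    set g : X → ℕ := fun x => Nat.card (F ⁻¹' {(x : ℝ × ℝ)}) with hg
    have hlc : IsLocallyConstant g := by
      rw [IsLocallyConstant.iff_eventually_eq]
      intro x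
      obtain ⟨U, hU, hUc⟩ := key x.1 x.2
      have : Subtype.val ⁻¹' U ∈ nhds x :=
        continuous_subtype_val.continuousAt.preimage_mem_nhds hU
      filter_upwards [this] with y hy
      exact hUc y.1 hy
    rw [connectedComponentIn_eq_image hw] at hw'
    obtain ⟨y, hy, rfl⟩ := hw'
    exact hlc.apply_eq_of_isPreconnected isPreconnected_connectedComponent hy
      mem_connectedComponent
end

section
/- Let X, Y be nonempty connected open subsets of ℝ², and let F : X → Y be a C¹ map with everywhere invertible Jacobian, which is proper as a map from X to Y, and surjective with all fibers of the same finite cardinality k > 0. Then F : X → Y is a covering map. -/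
open Set
open Topology

theorem aux_covering {E B : Type*} [TopologicalSpace E] [TopologicalSpace B] [T2Space E]
    {f : E → B} (hlh : IsLocalHomeomorph f) (hcl : IsClosedMap f)
    (hfin : ∀ b : B, (f ⁻¹' {b}).Finite) (hne : ∀ b : B, (f ⁻¹' {b}).Nonempty) :
    IsCoveringMap f := by
  have hcont : Continuous f := hlh.continuous
  intro y
  set S : Set E := f ⁻¹' {y} with hSdef
  haveI hSfin : Finite ↥S := (hfin y).to_subtype
  haveI hSne : Nonempty ↥S := (hne y).to_subtype
  obtain ⟨B0, hB0, hdisj⟩ := (hfin y).t2_separation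
  have hg : ∀ p : ↥S, ∃ g : OpenPartialHomeomorph E B,
      (↑p : E) ∈ g.source ∧ ⇑g = f ∧ g.source ⊆ B0 ↑p := by
    intro p
    obtain ⟨e, he, hfe⟩ := hlh ↑p
    refine ⟨e.restrOpen (B0 ↑p) (hB0 ↑p).2, ⟨he, (hB0 ↑p).1⟩, ?_, ?_⟩
    · rw [hfe]; rfl
    · rw [e.restrOpen_source]; exact inter_subset_right
  choose g hgmem hgf hgsub using hg
  have huniq : ∀ {x : E} {p q : ↥S}, x ∈ (g p).source → x ∈ (g q).source → p = q := by
    intro x p q hp hq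
    by_contra h
    exact Set.disjoint_left.mp (hdisj p.2 q.2 (fun h' => h (Subtype.coe_injective h')))
      (hgsub p hp) (hgsub q hq)
  set U : Set E := ⋃ p : ↥S, (g p).source with hUdef
  have hUopen : IsOpen U := isOpen_iUnion fun p => (g p).open_source
  set V : Set B := ⋂ p : ↥S, (g p).target with hVdef
  have hVopen : IsOpen V := isOpen_iInter_of_finite fun p => (g p).open_target
  set W : Set B := V ∩ (f '' Uᶜ)ᶜ with hWdef
  have hWopen : IsOpen W := hVopen.inter (hcl _ hUopen.isClosed_compl).isOpen_compl
  have hyW : y ∈ W := by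
    constructor
    · refine mem_iInter.mpr fun p => ?_
      have := (g p).map_source (hgmem p)
      rwa [show g p ↑p = y from by rw [hgf p]; exact p.2] at this
    · rintro ⟨x, hxU, hxy⟩
      exact hxU (mem_iUnion.mpr ⟨⟨x, hxy⟩, hgmem ⟨x, hxy⟩⟩)
  have hUW : ∀ {x : E}, f x ∈ W → x ∈ U := by
    intro x hx
    by_contra h
    exact hx.2 ⟨x, h, rfl⟩
  have hWV : ∀ {b : B} {p : ↥S}, b ∈ W → b ∈ (g p).target := fun hb => mem_iInter.mp hb.1 _
  classical
  set σ : E → ↥S := fun x =>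
    if h : ∃ p : ↥S, x ∈ (g p).source then h.choose else Classical.arbitrary _ with hσdef
  have hσu : ∀ {x : E} {p : ↥S}, x ∈ (g p).source → σ x = p := by
    intro x p hx
    have h : ∃ q : ↥S, x ∈ (g q).source := ⟨p, hx⟩
    rw [hσdef]; simp only [dif_pos h]
    exact huniq h.choose_spec hx
  have hσmem : ∀ {x : E}, f x ∈ W → x ∈ (g (σ x)).source := by
    intro x hx
    obtain ⟨p, hp⟩ := mem_iUnion.mp (hUW hx)
    rw [hσu hp]; exact hp
  haveI : DiscreteTopology ↥S := inferInstance
  suffices h : ∃ t : Bundle.Trivialization ↥S f, y ∈ t.baseSet from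
    IsEvenlyCovered.of_trivialization h.choose_spec
  refine ⟨{ toFun := fun x => (f x, σ x)
            invFun := fun q => (g q.2).symm q.1
            source := f ⁻¹' W
            target := W ×ˢ (univ : Set ↥S)
            map_source' := fun x hx => ⟨hx, mem_univ _⟩
            map_target' := ?_
            left_inv' := ?_
            right_inv' := ?_
            open_source := hWopen.preimage hcont
            open_target := hWopen.prod isOpen_univ
            continuousOn_toFun := ?_
            continuousOn_invFun := ?_
            baseSet := W
            open_baseSet := hWopen
            source_eq := rfl
            target_eq := rfl
            proj_toFun := fun x _ => rfl }, hyW⟩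
  · -- map_target'
    rintro ⟨b, p⟩ hq
    have hb : b ∈ (g p).target := hWV hq.1
    show f ((g p).symm b) ∈ W
    rw [← hgf p, (g p).right_inv hb]
    exact hq.1
  · -- left_inv'
    intro x hx
    have hx' := hσmem hx
    show (g (σ x)).symm (f x) = x
    rw [← hgf (σ x)]
    exact (g (σ x)).left_inv hx'
  · -- right_inv'
    rintro ⟨b, p⟩ hq
    have hb : b ∈ (g p).target := hWV hq.1
    have hx : (g p).symm b ∈ (g p).source := (g p).map_target hb
    have h1 : f ((g p).symm b) = b := by rw [← hgf p]; exact (g p).right_inv hb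
    exact Prod.ext h1 (hσu hx)
  · -- continuousOn_toFun
    intro x hx
    apply ContinuousAt.continuousWithinAt
    show ContinuousAt (fun z => ((f z : B), σ z)) x
    have heq : (fun z => ((f z : B), σ x)) =ᶠ[𝓝 x] fun z => (f z, σ z) :=
      Filter.eventuallyEq_of_mem ((g (σ x)).open_source.mem_nhds (hσmem hx))
        fun z hz => by simp [hσu hz]
    have hc : ContinuousAt (fun z => ((f z : B), σ x)) x :=
      hcont.continuousAt.prodMk continuousAt_const
    exact hc.congr_of_eventuallyEq heq.symm
  · -- continuousOn_invFun
    rintro ⟨b, p⟩ hq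
    apply ContinuousAt.continuousWithinAt
    show ContinuousAt (fun r : B × ↥S => (g r.2).symm r.1) (b, p)
    have hopen : IsOpen ((univ : Set B) ×ˢ ({p} : Set ↥S)) :=
      isOpen_univ.prod (isOpen_discrete _)
    have heq : (fun r : B × ↥S => (g p).symm r.1) =ᶠ[𝓝 (b, p)]
        fun r : B × ↥S => (g r.2).symm r.1 :=
      Filter.eventuallyEq_of_mem (hopen.mem_nhds ⟨trivial, rfl⟩)
        fun r hr => by rw [show r.2 = p from hr.2]
    have hb : b ∈ (g p).target := hWV hq.1
    have hc : ContinuousAt (fun r : B × ↥S => (g p).symm r.1) (b, p) :=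
      ((g p).symm.continuousAt hb).comp continuousAt_fst
    exact hc.congr_of_eventuallyEq heq.symm

/-- A `C¹` map with everywhere invertible Jacobian between nonempty connected
open subsets of `ℝ²`, proper as a map `X → Y`, surjective with all fibers of the
same finite cardinality `k > 0`, is a covering map. -/
theorem stmt_9 (X Y : Set (ℝ × ℝ)) (hXo : IsOpen X) (hYo : IsOpen Y)
    (hXc : IsConnected X) (hYc : IsConnected Y)
    (F : ℝ × ℝ → ℝ × ℝ) (hmaps : Set.MapsTo F X Y)
    (hC1 : ContDiffOn ℝ 1 F X)
    (hreg : ∀ p ∈ X,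
      ∃ L : (ℝ × ℝ) ≃L[ℝ] (ℝ × ℝ), HasFDerivAt F (L : (ℝ × ℝ) →L[ℝ] (ℝ × ℝ)) p)
    (hproper : ∀ K : Set (ℝ × ℝ), K ⊆ Y → IsCompact K → IsCompact (X ∩ F ⁻¹' K))
    (k : ℕ) (hk : 0 < k)
    (hfib : ∀ y ∈ Y, Nat.card ({p ∈ X | F p = y} : Set (ℝ × ℝ)) = k) :
    IsCoveringMap (Set.MapsTo.restrict F X Y hmaps) := by
  haveI : Nonempty ↥X := hXc.nonempty.to_subtype
  haveI : Nonempty ↥Y := hYc.nonempty.to_subtype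
  set f : ↥X → ↥Y := Set.MapsTo.restrict F X Y hmaps with hfdef
  have hfval : ∀ x : ↥X, (f x : ℝ × ℝ) = F ↑x := fun x => rfl
  have hcont : Continuous f := hC1.continuousOn.mapsToRestrict hmaps
  -- the fibers
  have hfiber : ∀ b : ↥Y, (f ⁻¹' {b}).Finite ∧ (f ⁻¹' {b}).Nonempty := by
    intro b
    have hcard := hfib ↑b b.2
    have hpos : 0 < Nat.card ({p ∈ X | F p = ↑b} : Set (ℝ × ℝ)) := hcard ▸ hk
    rw [Nat.card_pos_iff] at hpos
    obtain ⟨hne', hfin'⟩ := hpos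
    constructor
    · rw [← Set.finite_coe_iff]
      refine Finite.of_injective
        (fun x : ↥(f ⁻¹' {b}) => (⟨↑↑x, ⟨x.1.2, (hfval x.1).symm.trans (congrArg Subtype.val x.2)⟩⟩ :
          ↥({p ∈ X | F p = ↑b} : Set (ℝ × ℝ)))) ?_
      intro a c hac
      have h2 : (↑↑a : ℝ × ℝ) = ↑↑c := by simpa using hac
      exact Subtype.ext (Subtype.ext h2)
    · obtain ⟨⟨p, hpX, hpF⟩⟩ := hne'
      exact ⟨⟨p, hpX⟩, Subtype.ext hpF⟩
  -- local homeomorphism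
  have hlh : IsLocalHomeomorph f := by
    rw [isLocalHomeomorph_iff_isLocalHomeomorphOn_univ]
    apply IsLocalHomeomorphOn.mk
    intro x _
    obtain ⟨L, hL⟩ := hreg ↑x x.2
    have hsd : HasStrictFDerivAt F (L : (ℝ × ℝ) →L[ℝ] (ℝ × ℝ)) ↑x := by
      have hca : ContDiffAt ℝ 1 F ↑x := hC1.contDiffAt (hXo.mem_nhds x.2)
      have := hca.hasStrictFDerivAt one_ne_zero
      rwa [hL.fderiv] at this
    set e0 : OpenPartialHomeomorph (ℝ × ℝ) (ℝ × ℝ) := HasStrictFDerivAt.toOpenPartialHomeomorph (hf := hsd) F with he0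
    have he0coe : ⇑e0 = F := HasStrictFDerivAt.toOpenPartialHomeomorph_coe (hf := hsd)
    set e1 : OpenPartialHomeomorph (ℝ × ℝ) (ℝ × ℝ) := e0.restrOpen X hXo with he1
    have he1coe : ⇑e1 = F := he0coe
    have he1src : e1.source = e0.source ∩ X := e0.restrOpen_source X hXo
    have hxe1 : (↑x : ℝ × ℝ) ∈ e1.source := by
      rw [he1src]; exact ⟨HasStrictFDerivAt.mem_toOpenPartialHomeomorph_source (hf := hsd), x.2⟩
    have he1Y : e1.target ⊆ Y := by
      rw [← e1.image_source_eq_target]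
      rintro _ ⟨z, hz, rfl⟩
      rw [he1coe]
      exact hmaps (he1src ▸ hz).2
    set eX : OpenPartialHomeomorph ↥X (ℝ × ℝ) :=
      hXo.isOpenEmbedding_subtypeVal.toOpenPartialHomeomorph _ with heX
    set eY : OpenPartialHomeomorph ↥Y (ℝ × ℝ) :=
      hYo.isOpenEmbedding_subtypeVal.toOpenPartialHomeomorph _ with heY
    have heXcoe : ⇑eX = (Subtype.val : ↥X → ℝ × ℝ) :=
      hXo.isOpenEmbedding_subtypeVal.toOpenPartialHomeomorph_apply _
    have heXsrc : eX.source = univ :=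
      hXo.isOpenEmbedding_subtypeVal.toOpenPartialHomeomorph_source _
    have heYtgt : eY.target = Set.range (Subtype.val : ↥Y → ℝ × ℝ) :=
      hYo.isOpenEmbedding_subtypeVal.toOpenPartialHomeomorph_target _
    refine ⟨(eX.trans e1).trans eY.symm, ?_, ?_⟩
    · have h1 : (eX x : ℝ × ℝ) = ↑x := congrFun heXcoe x
      rw [OpenPartialHomeomorph.trans_source]
      refine ⟨?_, ?_⟩
      · rw [OpenPartialHomeomorph.trans_source]
        exact ⟨heXsrc ▸ mem_univ x, by rw [mem_preimage, h1]; exact hxe1⟩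
      · rw [mem_preimage, OpenPartialHomeomorph.symm_source, heYtgt,
          OpenPartialHomeomorph.trans_apply, h1, he1coe, Subtype.range_coe]
        exact hmaps x.2
    · intro z hz
      have h1 : (eX z : ℝ × ℝ) = ↑z := congrFun heXcoe z
      have hFz : F ↑z ∈ Set.range (Subtype.val : ↥Y → ℝ × ℝ) := by
        rw [Subtype.range_coe]; exact hmaps z.2
      apply Subtype.val_injective
      show (f z : ℝ × ℝ) = ↑(((eX.trans e1).trans eY.symm) z)
      rw [hfval]
      have h2 : ((eX.trans e1).trans eY.symm) z = eY.symm (e1 (eX z)) := rfl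
      rw [h2, h1, he1coe]
      exact (hYo.isOpenEmbedding_subtypeVal.toOpenPartialHomeomorph_right_inv _ hFz).symm
  -- closed map
  have hcl : IsClosedMap f := by
    haveI : LocallyCompactSpace ↥Y := hYo.locallyCompactSpace
    have hproper' : IsProperMap f := by
      rw [isProperMap_iff_isCompact_preimage]
      refine ⟨hcont, fun K hK => ?_⟩
      have hKY : (Subtype.val '' K : Set (ℝ × ℝ)) ⊆ Y := by
        rintro _ ⟨q, _, rfl⟩; exact q.2
      have hKc : IsCompact (Subtype.val '' K : Set (ℝ × ℝ)) :=
        hK.image continuous_subtype_val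
      have him : Subtype.val '' (f ⁻¹' K) = X ∩ F ⁻¹' (Subtype.val '' K) := by
        ext p
        constructor
        · rintro ⟨q, hq, rfl⟩
          exact ⟨q.2, ⟨f q, hq, (hfval q).symm⟩⟩
        · rintro ⟨hpX, q, hqK, hqF⟩
          refine ⟨⟨p, hpX⟩, ?_, rfl⟩
          show f ⟨p, hpX⟩ ∈ K
          have : f ⟨p, hpX⟩ = q := Subtype.ext (by rw [hfval]; exact hqF.symm)
          rwa [this]
      rw [Topology.IsEmbedding.subtypeVal.isCompact_iff, him]
      exact hproper _ hKY hKc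
    exact hproper'.isClosedMap
  exact aux_covering hlh hcl (fun b => (hfiber b).1) (fun b => (hfiber b).2)
end

section
/- Let θ₀, θ₁ : [0, 2π] → ℝ be continuous functions with θ₀(2π) − θ₀(0) = θ₁(2π) − θ₁(0) = 2πn for a nonzero integer n. For s ∈ [0,1] let θ_s = (1−s)θ₀ + sθ₁ and X(s,t) = (cos θ_s(t), sin θ_s(t)), m(s) = (1/2π)∫₀^{2π} X(s,t) dt. Then |m(s)| < 1 for every s ∈ [0,1]. -/
open Real Set

/-- Key estimate in the Whitney–Graustein proof: the average over `[0,2π]` of the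
unit vectors `X(s,t) = e^{iθ_s(t)}`, where `θ_s = (1-s)θ₀ + sθ₁` and both `θ₀`,
`θ₁` have total change `2πn` with `n ≠ 0`, has norm strictly less than `1`. -/
theorem stmt_13 (θ₀ θ₁ : ℝ → ℝ)
    (h₀ : ContinuousOn θ₀ (Icc 0 (2 * π))) (h₁ : ContinuousOn θ₁ (Icc 0 (2 * π)))
    (n : ℤ) (hn : n ≠ 0)
    (hΔ₀ : θ₀ (2 * π) - θ₀ 0 = 2 * π * n) (hΔ₁ : θ₁ (2 * π) - θ₁ 0 = 2 * π * n)
    (s : ℝ) (hs : s ∈ Icc (0:ℝ) 1)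
    (m : ℂ)
    (hm : m = (1 / (2 * π) : ℝ) *
      ∫ t in (0:ℝ)..(2 * π), Complex.exp ((((1 - s) * θ₀ t + s * θ₁ t : ℝ) : ℂ) * Complex.I)) :
    ‖m‖ < 1 := by
  have hπ : (0:ℝ) < 2 * π := by positivity
  set θ : ℝ → ℝ := fun t => (1 - s) * θ₀ t + s * θ₁ t with hθdef
  have hθc : ContinuousOn θ (Icc 0 (2 * π)) :=
    (continuousOn_const.mul h₀).add (continuousOn_const.mul h₁)
  set f : ℝ → ℂ := fun t => Complex.exp ((θ t : ℂ) * Complex.I) with hfdef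
  have hfc : ContinuousOn f (Icc 0 (2 * π)) :=
    Complex.continuous_exp.comp_continuousOn
      ((Complex.continuous_ofReal.comp_continuousOn hθc).mul continuousOn_const)
  have hfi : IntervalIntegrable f MeasureTheory.volume 0 (2 * π) := by
    apply ContinuousOn.intervalIntegrable
    rwa [uIcc_of_le hπ.le]
  have hf1 : ∀ t, ‖f t‖ = 1 := fun t => by
    simp [hfdef, Complex.norm_exp]
  have hΔ : θ (2 * π) = θ 0 + 2 * π * n := by
    simp only [hθdef]
    linear_combination (1 - s) * hΔ₀ + s * hΔ₁
  -- |m| ≤ 1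
  have hIle : ‖∫ t in (0:ℝ)..(2 * π), f t‖ ≤ 2 * π := by
    have := intervalIntegral.norm_integral_le_of_norm_le_const
      (f := f) (a := (0:ℝ)) (b := 2 * π) (C := 1) (fun x _ => by
        rw [hf1 x])
    simpa [abs_of_pos hπ] using this
  have hle : ‖m‖ ≤ 1 := by
    rw [hm, norm_mul, Complex.norm_real, Real.norm_eq_abs, abs_of_pos (by positivity : (0:ℝ) < 1 / (2 * π))]
    rw [div_mul_eq_mul_div, one_mul, div_le_one hπ]
    exact hIle
  by_contra hcon
  push_neg at hcon
  have habs1 : ‖m‖ = 1 := le_antisymm hle hcon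
  have hmI : (∫ t in (0:ℝ)..(2 * π), f t) = (2 * π : ℝ) * m := by
    have h2π : ((2 * π : ℝ) : ℂ) ≠ 0 := by exact_mod_cast hπ.ne'
    have h2π' : (2 * (π:ℂ)) ≠ 0 := by
      push_cast at h2π
      exact h2π
    rw [hm]
    push_cast
    rw [← mul_assoc, mul_one_div, div_self h2π', one_mul]
  -- the nonnegative function φ
  set φ : ℝ → ℝ := fun t => 1 - ((starRingEnd ℂ) m * f t).re with hφdef
  have hφnn : ∀ t, 0 ≤ φ t := by
    intro t
    have h1 : ((starRingEnd ℂ) m * f t).re ≤ ‖(starRingEnd ℂ) m * f t‖ :=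
      Complex.re_le_norm _
    have h2 : ‖(starRingEnd ℂ) m * f t‖ = 1 := by
      rw [norm_mul, Complex.norm_conj, habs1, hf1, mul_one]
    simp only [hφdef]
    linarith [h2 ▸ h1]
  have hφc : ContinuousOn φ (Icc 0 (2 * π)) := by
    apply continuousOn_const.sub
    exact Complex.continuous_re.comp_continuousOn (continuousOn_const.mul hfc)
  have hφi : IntervalIntegrable φ MeasureTheory.volume 0 (2 * π) := by
    apply ContinuousOn.intervalIntegrable
    rwa [uIcc_of_le hπ.le]
  have hmfint : IntervalIntegrable (fun t => (starRingEnd ℂ) m * f t)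
      MeasureTheory.volume 0 (2 * π) := hfi.const_mul _
  have hnormSq : (starRingEnd ℂ) m * m = 1 := by
    rw [mul_comm, Complex.mul_conj]
    norm_cast
    rw [Complex.normSq_eq_norm_sq, habs1, one_pow]
  have hrei : IntervalIntegrable (fun t => ((starRingEnd ℂ) m * f t).re)
      MeasureTheory.volume 0 (2 * π) := by
    apply ContinuousOn.intervalIntegrable
    rw [uIcc_of_le hπ.le]
    exact Complex.continuous_re.comp_continuousOn (continuousOn_const.mul hfc)
  have hφzero : (∫ t in (0:ℝ)..(2 * π), φ t) = 0 := by
    have h1 := Complex.reCLM.intervalIntegral_comp_comm hmfint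
    simp only [Complex.reCLM_apply] at h1
    have hconst : (∫ t in (0:ℝ)..(2 * π), (starRingEnd ℂ) m * f t)
        = (starRingEnd ℂ) m * ∫ t in (0:ℝ)..(2 * π), f t :=
      intervalIntegral.integral_const_mul _ _
    have hre : (∫ t in (0:ℝ)..(2 * π), ((starRingEnd ℂ) m * f t).re) = 2 * π := by
      rw [h1, hconst, hmI]
      have h2 : (starRingEnd ℂ) m * ((2 * π : ℝ) * m) = ((2 * π : ℝ) : ℂ) := by
        rw [mul_comm ((2 * π : ℝ) : ℂ) m, ← mul_assoc, hnormSq, one_mul]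
      rw [h2, Complex.ofReal_re]
    have : (∫ t in (0:ℝ)..(2 * π), φ t)
        = (∫ t in (0:ℝ)..(2 * π), (1:ℝ)) - ∫ t in (0:ℝ)..(2 * π), ((starRingEnd ℂ) m * f t).re := by
      simp only [hφdef]
      rw [intervalIntegral.integral_sub intervalIntegrable_const hrei]
    rw [this, hre, intervalIntegral.integral_const]
    simp
  -- hence φ = 0 a.e. on Ioc, hence everywhere on Ioc
  have hφae : φ =ᵐ[MeasureTheory.volume.restrict (Ioc 0 (2 * π))] 0 := by
    rw [← intervalIntegral.integral_eq_zero_iff_of_le_of_nonneg_ae hπ.le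
      (Filter.Eventually.of_forall fun t => hφnn t) hφi]
    exact hφzero
  have hφeq : EqOn φ 0 (Ioc 0 (2 * π)) :=
    MeasureTheory.Measure.eqOn_Ioc_of_ae_eq (μ := MeasureTheory.volume) hφae
      (hφc.mono Ioc_subset_Icc_self) continuousOn_const
  -- for t ∈ Ioc, f t = m
  have hfm : ∀ t ∈ Ioc (0:ℝ) (2 * π), f t = m := by
    intro t ht
    have h0 : ((starRingEnd ℂ) m * f t).re = 1 := by
      have := hφeq ht
      simp only [hφdef, Pi.zero_apply] at this
      linarith
    have habs : ‖(starRingEnd ℂ) m * f t‖ = 1 := by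
      rw [norm_mul, Complex.norm_conj, habs1, hf1, mul_one]
    have him : ((starRingEnd ℂ) m * f t).im = 0 := by
      have hsq := Complex.sq_norm ((starRingEnd ℂ) m * f t)
      rw [habs, Complex.normSq_apply, h0] at hsq
      nlinarith
    have hone : (starRingEnd ℂ) m * f t = 1 := by
      apply Complex.ext <;> simp [h0, him]
    calc f t = ((starRingEnd ℂ) m * m) * f t := by rw [hnormSq, one_mul]
      _ = m * ((starRingEnd ℂ) m * f t) := by ring
      _ = m := by rw [hone, mul_one]
  -- f (2π) = f 0 = m
  have hend : f (2 * π) = f 0 := by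
    simp only [hfdef, hΔ]
    push_cast
    rw [add_mul, Complex.exp_add]
    have : ((2:ℂ) * π * n) * Complex.I = n * (2 * π * Complex.I) := by ring
    rw [this, Complex.exp_int_mul_two_pi_mul_I, mul_one]
  have hf0m : f 0 = m := by
    rw [← hend]
    exact hfm _ ⟨hπ, le_refl _⟩
  -- IVT: θ attains θ 0 ± π
  obtain ⟨c, hcabs, hcmem⟩ : ∃ c : ℝ, Complex.exp ((c:ℂ) * Complex.I) = -1 ∧
      θ 0 + c ∈ uIcc (θ 0) (θ (2 * π)) := by
    rcases hn.lt_or_gt with hneg | hpos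
    · refine ⟨-π, ?_, ?_⟩
      · push_cast
        rw [neg_mul, Complex.exp_neg, Complex.exp_pi_mul_I]
        norm_num
      · rw [hΔ, mem_uIcc]
        right
        constructor
        · have : (n:ℝ) ≤ -1 := by exact_mod_cast (by omega : n ≤ -1)
          nlinarith [pi_pos]
        · linarith [pi_pos]
    · refine ⟨π, Complex.exp_pi_mul_I, ?_⟩
      rw [hΔ, mem_uIcc]
      left
      constructor
      · linarith [pi_pos]
      · have : (1:ℝ) ≤ (n:ℝ) := by exact_mod_cast hpos
        nlinarith [pi_pos]
  have hIVT := intermediate_value_uIcc (f := θ) (a := 0) (b := 2 * π)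
    (by rwa [uIcc_of_le hπ.le])
  obtain ⟨t, ht, htθ⟩ := hIVT hcmem
  rw [uIcc_of_le hπ.le] at ht
  have htpos : 0 < t := by
    rcases ht.1.lt_or_eq with h | h
    · exact h
    · exfalso
      rw [← h] at htθ
      have hc : c ≠ 0 := by
        intro h0
        rw [h0] at hcabs
        simp at hcabs
        exact (by norm_num : (1:ℂ) ≠ -1) hcabs
      exact hc (by linarith)
  have hft : f t = -f 0 := by
    simp only [hfdef, htθ]
    push_cast
    rw [add_mul, Complex.exp_add, hcabs]
    ring
  have hftm : f t = m := hfm t ⟨htpos, ht.2⟩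
  have : f 0 = -f 0 := by
    calc f 0 = m := hf0m
      _ = f t := hftm.symm
      _ = -f 0 := hft
  have hzero : f 0 = 0 := by
    have := this
    linear_combination (1/2 : ℂ) * this
  have := hf1 0
  rw [hzero] at this
  simp at this
end

section
/- Let F : ℝ² → ℝ² be an affine map F(v) = q + A·v with A an invertible 2×2 matrix, and let γ(t) = p + ρ(cos t, sin t) be a positively oriented circle. Then the rotation number of the regular closed curve F ∘ γ equals sgn(det A). -/
open Real Set Complex


noncomputable def E (s : ℝ) : ℂ := Complex.exp (s * Complex.I)
lemma E_norm (s : ℝ) : ‖E s‖ = 1 := by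
  simp [E, Complex.norm_exp_ofReal_mul_I]
lemma E_ne_zero (s : ℝ) : E s ≠ 0 := Complex.exp_ne_zero _
lemma E_add (s t : ℝ) : E (s + t) = E s * E t := by
  simp [E, ← Complex.exp_add]; ring_nf
lemma E_cont : Continuous E := by
  exact Complex.continuous_exp.comp (by continuity)
lemma abs_E_arg (z : ℂ) : z = (‖z‖ : ℂ) * E z.arg := by
  rw [E]; exact (Complex.norm_mul_exp_arg_mul_I z).symm
lemma E_inj_int (x y : ℝ) (h : E x = E y) : ∃ n : ℤ, x = y + n * (2 * π) := by
  obtain ⟨n, hn⟩ := Complex.exp_eq_exp_iff_exists_int.1 h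
  refine ⟨n, ?_⟩
  have h2 : (x : ℂ) * I = ((y + n * (2 * π) : ℝ) : ℂ) * I := by
    rw [hn]; push_cast; ring
  have := mul_right_cancel₀ Complex.I_ne_zero h2
  exact_mod_cast this

lemma key (α β : ℂ) (hab : ‖β‖ < ‖α‖) (ε : ℝ) (hε : ε = 1 ∨ ε = -1)
    (θ : ℝ → ℝ) (hθ : ContinuousOn θ (Icc 0 (2 * π)))
    (f : ℝ → ℂ) (hf : ∀ t, f t = α * E (ε * t) + β * E (-(ε * t)))
    (harg : ∀ t ∈ Icc 0 (2 * π), f t = (‖f t‖ : ℂ) * E (θ t)) :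
    θ (2 * π) - θ 0 = 2 * π * ε := by
  have hα : α ≠ 0 := by
    intro h; rw [h, norm_zero] at hab; exact absurd hab (not_lt.2 (norm_nonneg _))
  set w : ℂ := β / α with hw_def
  have hw : ‖w‖ < 1 := by
    rw [hw_def, norm_div, div_lt_one (norm_pos_iff.2 hα)]; exact hab
  set g : ℝ → ℂ := fun t => 1 + w * E (-(2 * ε * t)) with hg_def
  have hgre : ∀ t, 0 < (g t).re := by
    intro t
    have h1 : ‖w * E (-(2 * ε * t))‖ < 1 := by
      rw [norm_mul, E_norm, mul_one]; exact hw
    have h2 : (w * E (-(2 * ε * t))).re ≥ -1 := by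
      have := Complex.abs_re_le_norm (w * E (-(2 * ε * t)))
      nlinarith [abs_le.1 (this.trans h1.le)]
    have h2' : -1 < (w * E (-(2 * ε * t))).re := by
      have := Complex.abs_re_le_norm (w * E (-(2 * ε * t)))
      nlinarith [abs_le.1 this]
    simp only [hg_def, Complex.add_re, Complex.one_re]
    linarith
  have hg0 : ∀ t, g t ≠ 0 := fun t h => by
    have := hgre t; rw [h] at this; simp at this
  have hfact : ∀ t, f t = α * E (ε * t) * g t := by
    intro t
    rw [hf t, hg_def]
    simp only
    rw [mul_add, mul_one, hw_def]
    congr 1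
    have h5 : E (ε * t) * E (-(2 * ε * t)) = E (-(ε * t)) := by
      rw [← E_add]; ring_nf
    field_simp
    rw [← h5]
    ring
  have hfnorm : ∀ t, ‖f t‖ = ‖α‖ * ‖g t‖ := by
    intro t; rw [hfact t, norm_mul, norm_mul, E_norm, mul_one]
  have hf0 : ∀ t, f t ≠ 0 := by
    intro t
    rw [hfact t]
    exact mul_ne_zero (mul_ne_zero hα (E_ne_zero _)) (hg0 t)
  -- the reference lift
  set θ₀ : ℝ → ℝ := fun t => ε * t + α.arg + (g t).arg with hθ₀_def
  have hθ₀cont : Continuous θ₀ := by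
    have hgc : Continuous g := by
      apply continuous_const.add
      exact continuous_const.mul (E_cont.comp ((continuous_const.mul continuous_id).neg))
    have hargc : Continuous fun t => (g t).arg := by
      rw [continuous_iff_continuousAt]
      intro t
      exact (Complex.continuousAt_arg (Or.inl (hgre t))).comp hgc.continuousAt
    exact ((continuous_const.mul continuous_id).add continuous_const).add hargc
  have hid : ∀ t, f t = (‖f t‖ : ℂ) * E (θ₀ t) := by
    intro t
    rw [hfnorm t, hfact t]
    have h3 : θ₀ t = ε * t + α.arg + (g t).arg := rfl
    rw [h3, E_add, E_add]
    have h1 := abs_E_arg α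
    have h2 := abs_E_arg (g t)
    push_cast
    calc α * E (ε * t) * g t
        = ((‖α‖:ℂ) * E α.arg) * E (ε * t) * ((‖g t‖:ℂ) * E (g t).arg) := by
          rw [← h1, ← h2]
      _ = (‖α‖:ℂ) * (‖g t‖:ℂ) * (E (ε * t) * E α.arg * E (g t).arg) := by ring
  -- θ and θ₀ agree mod 2π on Icc
  have hmod : ∀ t ∈ Icc 0 (2 * π), ∃ n : ℤ, θ t - θ₀ t = n * (2 * π) := by
    intro t ht
    have h1 := harg t ht
    have h2 := hid t
    have h3 : (‖f t‖ : ℂ) * E (θ t) = (‖f t‖ : ℂ) * E (θ₀ t) := by rw [← h1, ← h2]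
    have hfn : (‖f t‖ : ℂ) ≠ 0 := by
      simp only [ne_eq, Complex.ofReal_eq_zero, norm_eq_zero]; exact hf0 t
    have h4 := mul_left_cancel₀ hfn h3
    obtain ⟨n, hn⟩ := E_inj_int _ _ h4
    exact ⟨n, by linarith⟩
  -- constancy of the integer
  obtain ⟨n0, hn0⟩ := hmod 0 ⟨le_refl _, by positivity⟩
  obtain ⟨n1, hn1⟩ := hmod (2*π) ⟨by positivity, le_refl _⟩
  have hneq : n1 = n0 := by
    by_contra hne
    set h : ℝ → ℝ := fun t => (θ t - θ₀ t) / (2 * π) with hh_def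
    have hhc : ContinuousOn h (Icc 0 (2*π)) :=
      ((hθ.sub hθ₀cont.continuousOn).div_const _)
    have hint : ∀ t ∈ Icc 0 (2*π), ∃ n : ℤ, h t = n := by
      intro t ht
      obtain ⟨n, hn⟩ := hmod t ht
      exact ⟨n, by rw [hh_def]; simp only; rw [hn]; field_simp⟩
    have h0 : h 0 = n0 := by rw [hh_def]; simp only; rw [hn0]; field_simp
    have h1 : h (2*π) = n1 := by rw [hh_def]; simp only; rw [hn1]; field_simp
    -- IVT: find value n0 + 1/2 or so between
    have hne2 : (n0:ℝ) ≠ (n1:ℝ) := by exact_mod_cast Ne.symm hne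
    rcases lt_or_gt_of_ne hne2 with hlt | hlt
    · have hmem : ((n0:ℝ) + 1/2) ∈ Icc (h 0) (h (2*π)) := by
        rw [h0, h1]
        constructor
        · linarith
        · have : (n0:ℝ) + 1 ≤ n1 := by exact_mod_cast hlt
          linarith
      obtain ⟨t, ht, hht⟩ := intermediate_value_Icc (by positivity) hhc hmem
      obtain ⟨m, hm⟩ := hint t ht
      rw [hm] at hht
      have : (2*m : ℤ) = 2*n0 + 1 := by
        have : (2:ℝ)*m = 2*n0+1 := by linarith
        exact_mod_cast this
      omega
    · have hmem : ((n1:ℝ) + 1/2) ∈ Icc (h (2*π)) (h 0) := by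
        rw [h0, h1]
        constructor
        · linarith
        · have : (n1:ℝ) + 1 ≤ n0 := by exact_mod_cast hlt
          linarith
      obtain ⟨t, ht, hht⟩ := intermediate_value_Icc' (by positivity) hhc hmem
      obtain ⟨m, hm⟩ := hint t ht
      rw [hm] at hht
      have : (2*m : ℤ) = 2*n1 + 1 := by
        have : (2:ℝ)*m = 2*n1+1 := by linarith
        exact_mod_cast this
      omega
  -- now compute
  have E_zero : E 0 = 1 := by simp [E]
  have E_int : ∀ n : ℤ, E (n * (2*π)) = 1 := by
    intro n
    rw [E]
    push_cast
    rw [show ((n:ℂ)) * (2*(π:ℂ)) * I = n * (2*π*I) by ring]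
    exact Complex.exp_int_mul_two_pi_mul_I n
  have hgper : g (2*π) = g 0 := by
    have h1 : E (-(2*ε*(2*π))) = 1 := by
      rcases hε with h | h <;> rw [h]
      · rw [show (-(2*(1:ℝ)*(2*π))) = ((-2:ℤ):ℝ) * (2*π) by push_cast; ring]; exact E_int _
      · rw [show (-(2*(-1:ℝ)*(2*π))) = ((2:ℤ):ℝ) * (2*π) by push_cast; ring]; exact E_int _
    have h2 : E (-(2*ε*0)) = 1 := by rw [show (-(2*ε*0)) = (0:ℝ) by ring]; exact E_zero
    show (1 : ℂ) + w * E (-(2*ε*(2*π))) = 1 + w * E (-(2*ε*0))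
    rw [h1, h2]
  have hθ₀diff : θ₀ (2*π) - θ₀ 0 = 2 * π * ε := by
    rw [hθ₀_def]; simp only [hgper]; ring
  have : θ (2*π) - θ 0 = (θ₀ (2*π) - θ₀ 0) + (n1 - n0 : ℤ) * (2*π) := by
    push_cast; linarith
  rw [this, hneq, hθ₀diff]
  push_cast; ring


lemma linA (A : ℂ ≃L[ℝ] ℂ) (x y : ℝ) :
    A ((x:ℂ) + y*I) = (A 1 - I * A I)/2 * ((x:ℂ)+y*I) + (A 1 + I * A I)/2 * ((x:ℂ) - y*I) := by
  have h1 : A ((x:ℂ) + y*I) = x • A 1 + y • A I := by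
    rw [show (x:ℂ) + y*I = x • (1:ℂ) + y • I by simp [Complex.real_smul]]
    rw [map_add, map_smul, map_smul]
  rw [h1, Complex.real_smul, Complex.real_smul]
  linear_combination ((y:ℂ) * A I) * Complex.I_sq

lemma hA_lem (A : ℂ ≃L[ℝ] ℂ) :
    ∀ z : ℂ, A z = (A 1 - I * A I)/2 * z + (A 1 + I * A I)/2 * (starRingEnd ℂ z) := by
  intro z
  have hc : (starRingEnd ℂ) z = (z.re : ℂ) - z.im * I := by
    apply Complex.ext <;> simp
  have hz : z = (z.re:ℂ) + z.im * I := (Complex.re_add_im z).symm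
  rw [hc]
  calc A z = A ((z.re:ℂ) + z.im*I) := by rw [← hz]
    _ = (A 1 - I * A I)/2 * ((z.re:ℂ)+z.im*I) + (A 1 + I * A I)/2 * ((z.re:ℂ) - z.im*I) :=
        linA A z.re z.im
    _ = (A 1 - I * A I)/2 * z + (A 1 + I * A I)/2 * ((z.re:ℂ) - z.im*I) := by rw [← hz]

lemma det_lem (A : ℂ ≃L[ℝ] ℂ) (a b : ℂ) (ha : a = (A 1 - I * A I)/2) (hb : b = (A 1 + I * A I)/2) :
    LinearMap.det ((A : ℂ →L[ℝ] ℂ) : ℂ →ₗ[ℝ] ℂ) = ‖a‖^2 - ‖b‖^2 := by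
  have hd : LinearMap.det ((A : ℂ →L[ℝ] ℂ) : ℂ →ₗ[ℝ] ℂ)
      = (A 1).re * (A I).im - (A I).re * (A 1).im := by
    rw [← LinearMap.det_toMatrix Complex.basisOneI, Matrix.det_fin_two]
    simp [LinearMap.toMatrix_apply, Complex.coe_basisOneI_repr]
  rw [hd, ha, hb]
  rw [Complex.sq_norm, Complex.sq_norm]
  rw [show (2:ℂ) = ((2:ℝ):ℂ) by norm_num]
  simp only [Complex.normSq_apply, Complex.div_ofReal_re, Complex.div_ofReal_im,
    Complex.sub_re, Complex.sub_im, Complex.add_re, Complex.add_im, Complex.mul_re,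
    Complex.mul_im, Complex.I_re, Complex.I_im]
  ring

lemma detne_lem (A : ℂ ≃L[ℝ] ℂ) : LinearMap.det ((A : ℂ →L[ℝ] ℂ) : ℂ →ₗ[ℝ] ℂ) ≠ 0 := by
  have : IsUnit (LinearMap.det (A.toLinearEquiv : ℂ →ₗ[ℝ] ℂ)) := LinearEquiv.isUnit_det' _
  simpa using this.ne_zero

/-- The image of a positively oriented circle under an invertible affine map
`F(v) = q + A·v` is a regular closed curve with rotation number `sgn (det A)`:
any continuous argument function of the derivative of `F ∘ γ` changes by
`2π · sgn (det A)`. -/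
theorem stmt_15 (A : ℂ ≃L[ℝ] ℂ) (q p : ℂ) (ρ : ℝ) (hρ : 0 < ρ)
    (F : ℂ → ℂ) (hF : F = fun v => q + A v)
    (γ : ℝ → ℂ) (hγ : γ = fun t : ℝ => p + (ρ : ℂ) * Complex.exp ((t : ℂ) * Complex.I))
    (θ : ℝ → ℝ) (hθ : ContinuousOn θ (Icc 0 (2 * π)))
    (harg : ∀ t ∈ Icc 0 (2 * π),
      deriv (F ∘ γ) t = (‖deriv (F ∘ γ) t‖ : ℂ) * Complex.exp ((θ t : ℂ) * Complex.I)) :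
    θ (2 * π) - θ 0 =
      2 * π * Real.sign (LinearMap.det ((A : ℂ →L[ℝ] ℂ) : ℂ →ₗ[ℝ] ℂ)) := by
  set a : ℂ := (A 1 - Complex.I * A Complex.I)/2 with ha
  set b : ℂ := (A 1 + Complex.I * A Complex.I)/2 with hb
  have hA := hA_lem A
  rw [← ha, ← hb] at hA
  have hdet := det_lem A a b ha hb
  have hdetne := detne_lem A
  -- derivative
  have hderiv : ∀ t : ℝ, deriv (F ∘ γ) t = A ((ρ:ℂ) * Complex.I * Complex.exp ((t:ℂ) * Complex.I)) := by
    intro t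
    have h1 : HasDerivAt (fun s : ℝ => ((s:ℂ))) 1 t := Complex.ofRealCLM.hasDerivAt
    have h2 : HasDerivAt (fun s : ℝ => (s:ℂ) * Complex.I) (1 * Complex.I) t := h1.mul_const Complex.I
    have h3 : HasDerivAt (fun s : ℝ => Complex.exp ((s:ℂ) * Complex.I))
        (Complex.exp ((t:ℂ)*Complex.I) * (1 * Complex.I)) t := h2.cexp
    have h4 : HasDerivAt γ ((ρ:ℂ) * (Complex.exp ((t:ℂ)*Complex.I) * (1*Complex.I))) t := by
      rw [hγ]; exact ((h3.const_mul (ρ:ℂ)).const_add p)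
    have h5 : HasDerivAt (F ∘ γ)
        ((A : ℂ →L[ℝ] ℂ) ((ρ:ℂ) * (Complex.exp ((t:ℂ)*Complex.I) * (1*Complex.I)))) t := by
      rw [hF]
      exact (((A : ℂ →L[ℝ] ℂ).hasFDerivAt.comp_hasDerivAt t h4).const_add q)
    rw [h5.deriv]
    show A _ = A _
    congr 1
    ring
  -- f in α/β form
  have hfform : ∀ t : ℝ, deriv (F ∘ γ) t
      = ((ρ:ℂ) * a * Complex.I) * E t + (-((ρ:ℂ) * b * Complex.I)) * E (-t) := by
    intro t
    rw [hderiv t, hA]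
    have hconj : (starRingEnd ℂ) ((ρ:ℂ) * Complex.I * Complex.exp ((t:ℂ) * Complex.I))
        = (ρ:ℂ) * (-Complex.I) * E (-t) := by
      rw [map_mul, map_mul, Complex.conj_ofReal, Complex.conj_I, ← Complex.exp_conj]
      congr 1
      rw [E]
      apply Complex.ext <;> simp
    rw [hconj]
    simp only [E]
    push_cast
    ring
  have hnormI : ‖Complex.I‖ = 1 := by simp
  have hnρ : ‖(ρ:ℂ)‖ = ρ := by
    rw [Complex.norm_real]; exact abs_of_pos hρ
  have hnα : ‖(ρ:ℂ) * a * Complex.I‖ = ρ * ‖a‖ := by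
    rw [norm_mul, norm_mul, hnρ, hnormI, mul_one]
  have hnβ : ‖-((ρ:ℂ) * b * Complex.I)‖ = ρ * ‖b‖ := by
    rw [norm_neg, norm_mul, norm_mul, hnρ, hnormI, mul_one]
  have harg' : ∀ t ∈ Icc 0 (2 * π),
      deriv (F ∘ γ) t = (‖deriv (F ∘ γ) t‖ : ℂ) * E (θ t) := by
    intro t ht; rw [E]; exact harg t ht
  rcases lt_trichotomy ‖b‖ ‖a‖ with hba | hba | hba
  · -- det positive
    have hsign : Real.sign (LinearMap.det ((A : ℂ →L[ℝ] ℂ) : ℂ →ₗ[ℝ] ℂ)) = 1 := by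
      apply Real.sign_of_pos
      rw [hdet]
      have h1 : (0:ℝ) ≤ ‖b‖ := norm_nonneg _
      nlinarith
    rw [hsign]
    have hlt : ‖-((ρ:ℂ) * b * Complex.I)‖ < ‖(ρ:ℂ) * a * Complex.I‖ := by
      rw [hnα, hnβ]; exact mul_lt_mul_of_pos_left hba hρ
    have := key ((ρ:ℂ) * a * Complex.I) (-((ρ:ℂ) * b * Complex.I)) hlt 1 (Or.inl rfl)
      θ hθ (deriv (F ∘ γ))
      (fun t => by rw [hfform t]; norm_num) harg'
    rw [this]
  · -- impossible
    exfalso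
    apply hdetne
    rw [hdet, hba]
    ring
  · -- det negative
    have hsign : Real.sign (LinearMap.det ((A : ℂ →L[ℝ] ℂ) : ℂ →ₗ[ℝ] ℂ)) = -1 := by
      apply Real.sign_of_neg
      rw [hdet]
      have h1 : (0:ℝ) ≤ ‖a‖ := norm_nonneg _
      nlinarith
    rw [hsign]
    have hlt : ‖(ρ:ℂ) * a * Complex.I‖ < ‖-((ρ:ℂ) * b * Complex.I)‖ := by
      rw [hnα, hnβ]; exact mul_lt_mul_of_pos_left hba hρ
    have := key (-((ρ:ℂ) * b * Complex.I)) ((ρ:ℂ) * a * Complex.I) hlt (-1) (Or.inr rfl)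
      θ hθ (deriv (F ∘ γ))
      (fun t => by rw [hfform t]; norm_num; ring) harg'
    rw [this]
end

section
/- Let F : ℝ² → ℝ² be C¹ and let p be a point with det DF(p) ≠ 0. Then there exists ρ₀ > 0 such that for all 0 < ρ < ρ₀, the curve t ↦ F(p + ρ(cos t, sin t)) is a regular closed curve and its rotation number equals sgn(det DF(p)). -/
open Real Set

private lemma exp_ofReal_mul_I_eq_one' {d : ℝ} (h : Complex.exp ((d : ℂ) * Complex.I) = 1) :
    ∃ n : ℤ, d = n * (2 * π) := by
  rw [Complex.exp_eq_one_iff] at h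
  obtain ⟨n, hn⟩ := h
  refine ⟨n, ?_⟩
  have h2 : (d : ℂ) * Complex.I = ((n * (2 * π) : ℝ) : ℂ) * Complex.I := by
    rw [hn]; push_cast; ring
  have := mul_right_cancel₀ Complex.I_ne_zero h2
  exact_mod_cast this

private lemma exp_one_of_two_pi_multiple (n : ℤ) (x : ℝ) (hx : x = n * (2 * π)) :
    Complex.exp ((x : ℂ) * Complex.I) = 1 := by
  rw [hx]
  push_cast
  rw [show ((n : ℂ) * (2 * (π : ℂ))) * Complex.I = (n : ℂ) * (2 * (π : ℂ) * Complex.I) by ring,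
    Complex.exp_int_mul_two_pi_mul_I]

private lemma winding_compare (T : ℝ) (hT : 0 ≤ T) (u v : ℝ → ℂ) (θu θv : ℝ → ℝ)
    (hu : ContinuousOn u (Icc 0 T)) (hv : ContinuousOn v (Icc 0 T))
    (hθu : ContinuousOn θu (Icc 0 T)) (hθv : ContinuousOn θv (Icc 0 T))
    (hlt : ∀ t ∈ Icc 0 T, ‖u t - v t‖ < ‖v t‖)
    (huT : u T = u 0) (hvT : v T = v 0)
    (hu' : ∀ t ∈ Icc 0 T, u t = (‖u t‖ : ℂ) * Complex.exp ((θu t : ℂ) * Complex.I))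
    (hv' : ∀ t ∈ Icc 0 T, v t = (‖v t‖ : ℂ) * Complex.exp ((θv t : ℂ) * Complex.I)) :
    θu T - θu 0 = θv T - θv 0 := by
  have hv0 : ∀ t ∈ Icc 0 T, v t ≠ 0 := by
    intro t ht h0
    have h1 := hlt t ht
    rw [h0, norm_zero] at h1
    exact absurd h1 (by simp [norm_nonneg])
  have hu0 : ∀ t ∈ Icc 0 T, u t ≠ 0 := by
    intro t ht h0
    have h1 := hlt t ht
    rw [h0, zero_sub, norm_neg] at h1
    exact lt_irrefl _ h1
  set d : ℝ → ℝ := fun t => θu t - θv t - Complex.arg (u t / v t) with hd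
  have hslit : ∀ t ∈ Icc 0 T, u t / v t ∈ Complex.slitPlane := by
    intro t ht
    left
    have hvne := hv0 t ht
    have h1 : ‖1 - u t / v t‖ < 1 := by
      have he : (1 : ℂ) - u t / v t = -((u t - v t) / v t) := by field_simp; ring
      rw [he, norm_neg, norm_div]
      rw [div_lt_one (by simpa [norm_pos_iff] using hvne)]
      simpa using hlt t ht
    have h2 : (1 - u t / v t).re ≤ ‖1 - u t / v t‖ := Complex.re_le_norm _
    have h3 : (1 - u t / v t).re = 1 - (u t / v t).re := by simp
    linarith
  have hdcont : ContinuousOn d (Icc 0 T) := by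
    refine (hθu.sub hθv).sub ?_
    intro t ht
    exact ContinuousAt.comp_continuousWithinAt (g := Complex.arg) (f := fun s => u s / v s)
      (Complex.continuousAt_arg (hslit t ht)) ((hu t ht).div (hv t ht) (hv0 t ht))
  have hd2π : ∀ t ∈ Icc 0 T, ∃ n : ℤ, d t = n * (2 * π) := by
    intro t ht
    apply exp_ofReal_mul_I_eq_one'
    have hvne := hv0 t ht
    have hune := hu0 t ht
    have hnu : ((‖u t‖ : ℝ) : ℂ) ≠ 0 := by simpa using hune
    have hnv : ((‖v t‖ : ℝ) : ℂ) ≠ 0 := by simpa using hvne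
    set X := Complex.exp ((θu t : ℂ) * Complex.I)
    set Y := Complex.exp ((θv t : ℂ) * Complex.I)
    set Z := Complex.exp ((Complex.arg (u t / v t) : ℂ) * Complex.I)
    have e1 : u t = (‖u t‖ : ℂ) * X := hu' t ht
    have e2 : v t = (‖v t‖ : ℂ) * Y := hv' t ht
    have habs : ‖u t / v t‖ * ‖v t‖ = ‖u t‖ := by
      rw [norm_div,
        div_mul_cancel₀ _ (norm_ne_zero_iff.mpr hvne)]
    have habsC : ((‖u t / v t‖ : ℝ) : ℂ) * ((‖v t‖ : ℝ) : ℂ) = ((‖u t‖ : ℝ) : ℂ) := by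
      exact_mod_cast habs
    have h := Complex.norm_mul_exp_arg_mul_I (u t / v t)
    rw [eq_div_iff hvne] at h
    have e4 : (‖u t‖ : ℂ) * Z * v t = u t * (‖v t‖ : ℂ) := by
      linear_combination ((‖v t‖ : ℝ) : ℂ) * h - Z * v t * habsC
    have h5 : ((‖v t‖ : ℝ) : ℂ) * (((‖u t‖ : ℝ) : ℂ) * X)
        = ((‖v t‖ : ℝ) : ℂ) * (((‖u t‖ : ℝ) : ℂ) * (Y * Z)) := by
      linear_combination (-((‖v t‖ : ℝ) : ℂ)) * e1 + ((‖u t‖ : ℝ) : ℂ) * Z * e2 - e4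
    have eX : X = Y * Z := mul_left_cancel₀ hnv (mul_left_cancel₀ hnu (by linear_combination h5))
    show Complex.exp ((↑(θu t - θv t - Complex.arg (u t / v t)) : ℂ) * Complex.I) = 1
    push_cast
    rw [sub_mul, sub_mul, Complex.exp_sub, Complex.exp_sub]
    rw [show Complex.exp ((θu t : ℂ) * Complex.I) = X from rfl,
        show Complex.exp ((θv t : ℂ) * Complex.I) = Y from rfl, eX, div_div,
        div_self (mul_ne_zero (Complex.exp_ne_zero _) (Complex.exp_ne_zero _))]
  have hpi := Real.pi_pos
  have hdT : d T = d 0 := by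
    by_contra hne
    obtain ⟨n0, hn0⟩ := hd2π 0 (left_mem_Icc.2 hT)
    obtain ⟨nT, hnT⟩ := hd2π T (right_mem_Icc.2 hT)
    have hmem : ∀ c ∈ uIcc (d 0) (d T), ∃ t ∈ Icc 0 T, d t = c := by
      intro c hc
      have h6 := intermediate_value_uIcc (f := d) (a := 0) (b := T) (by rwa [uIcc_of_le hT])
      obtain ⟨t, ht, hdt⟩ := h6 hc
      exact ⟨t, by rwa [uIcc_of_le hT] at ht, hdt⟩
    have hnne : n0 ≠ nT := fun h => hne (by rw [hn0, hnT, h])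
    rcases lt_or_gt_of_ne hnne with h | h
    · obtain ⟨t, ht, hdt⟩ := hmem (n0 * (2 * π) + π) (by
        rw [mem_uIcc]; left
        refine ⟨by rw [hn0]; linarith, ?_⟩
        rw [hnT]
        have : (n0 : ℝ) + 1 ≤ nT := by exact_mod_cast h
        nlinarith)
      obtain ⟨m, hm⟩ := hd2π t ht
      rw [hm] at hdt
      have h7 : (2 * m : ℝ) * π = (2 * n0 + 1) * π := by linarith
      have h8 : (2 * m : ℝ) = 2 * n0 + 1 := mul_right_cancel₀ (ne_of_gt hpi) h7
      have : (2 * m : ℤ) = 2 * n0 + 1 := by exact_mod_cast h8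
      omega
    · obtain ⟨t, ht, hdt⟩ := hmem (n0 * (2 * π) - π) (by
        rw [mem_uIcc]; right
        refine ⟨?_, by rw [hn0]; linarith⟩
        rw [hnT]
        have : (nT : ℝ) + 1 ≤ n0 := by exact_mod_cast h
        nlinarith)
      obtain ⟨m, hm⟩ := hd2π t ht
      rw [hm] at hdt
      have h7 : (2 * m : ℝ) * π = (2 * n0 - 1) * π := by linarith
      have h8 : (2 * m : ℝ) = 2 * n0 - 1 := mul_right_cancel₀ (ne_of_gt hpi) h7
      have : (2 * m : ℤ) = 2 * n0 - 1 := by exact_mod_cast h8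
      omega
  have h9 : θu T - θv T - Complex.arg (u T / v T) = θu 0 - θv 0 - Complex.arg (u 0 / v 0) := hdT
  rw [huT, hvT] at h9
  linarith

private lemma model_lift (c r : ℂ) (hr : ‖r‖ < 1) (ε : ℝ) :
    Continuous (fun t : ℝ => ε * t + Complex.arg c +
        Complex.arg (1 - r * Complex.exp (((-2 * ε * t : ℝ) : ℂ) * Complex.I))) ∧
      ∀ t : ℝ,
        c * Complex.exp (((ε * t : ℝ) : ℂ) * Complex.I) *
            (1 - r * Complex.exp (((-2 * ε * t : ℝ) : ℂ) * Complex.I))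
          = (‖c * Complex.exp (((ε * t : ℝ) : ℂ) * Complex.I) *
                (1 - r * Complex.exp (((-2 * ε * t : ℝ) : ℂ) * Complex.I))‖ : ℂ)
             * Complex.exp ((((ε * t + Complex.arg c +
                Complex.arg (1 - r * Complex.exp (((-2 * ε * t : ℝ) : ℂ) * Complex.I))) : ℝ) : ℂ)
                * Complex.I) := by
  set w : ℝ → ℂ := fun t => 1 - r * Complex.exp (((-2 * ε * t : ℝ) : ℂ) * Complex.I) with hw
  have hwre : ∀ t, 0 < (w t).re := by
    intro t
    have h1 : ‖r * Complex.exp (((-2 * ε * t : ℝ) : ℂ) * Complex.I)‖ = ‖r‖ := by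
      rw [norm_mul, Complex.norm_exp_ofReal_mul_I, mul_one]
    have h2 := Complex.re_le_norm (r * Complex.exp (((-2 * ε * t : ℝ) : ℂ) * Complex.I))
    simp only [hw, Complex.sub_re, Complex.one_re]
    rw [h1] at h2
    linarith
  have hwslit : ∀ t, w t ∈ Complex.slitPlane := fun t => Or.inl (hwre t)
  have hwcont : Continuous w := by fun_prop
  constructor
  · refine ((continuous_const.mul continuous_id).add continuous_const).add ?_
    rw [continuous_iff_continuousAt]
    intro t
    exact (Complex.continuousAt_arg (hwslit t)).comp hwcont.continuousAt
  · intro t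
    set E := Complex.exp (((ε * t : ℝ) : ℂ) * Complex.I) with hE
    have hnorm : ‖c * E * w t‖ = ‖c‖ * ‖w t‖ := by
      rw [norm_mul, norm_mul, hE, Complex.norm_exp_ofReal_mul_I]
      ring
    have hc' := Complex.norm_mul_exp_arg_mul_I c
    have hw' := Complex.norm_mul_exp_arg_mul_I (w t)
    have hnormC : ((‖c * E * w t‖ : ℝ) : ℂ)
        = ((‖c‖ : ℝ) : ℂ) * ((‖w t‖ : ℝ) : ℂ) := by
      rw [hnorm]; push_cast; ring
    rw [hnormC, Complex.ofReal_add, Complex.ofReal_add, add_mul, add_mul,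
      Complex.exp_add, Complex.exp_add]
    linear_combination (-(E * w t)) * hc'
      - ((‖c‖ : ℝ) : ℂ) * Complex.exp ((Complex.arg c : ℂ) * Complex.I) * E * hw'

private lemma linmap_decomp (A : ℂ →ₗ[ℝ] ℂ) (z : ℂ) :
    A z = (A 1 - Complex.I * A Complex.I) / 2 * z
      + (A 1 + Complex.I * A Complex.I) / 2 * (starRingEnd ℂ) z := by
  have hz : z = z.re • (1 : ℂ) + z.im • Complex.I := by
    simp [Complex.real_smul, Complex.re_add_im]
  nth_rewrite 1 [hz]
  rw [map_add, map_smul, map_smul]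
  simp only [Complex.real_smul]
  simp [Complex.ext_iff]
  constructor <;> ring

private lemma linmap_det (A : ℂ →ₗ[ℝ] ℂ) :
    LinearMap.det A = (A 1).re * (A Complex.I).im - (A Complex.I).re * (A 1).im := by
  rw [← LinearMap.det_toMatrix Complex.basisOneI, Matrix.det_fin_two]
  simp [LinearMap.toMatrix_apply, Complex.coe_basisOneI_repr, Complex.coe_basisOneI]

private lemma circle_affine_neg (a b : ℂ) (ρ t : ℝ) (hb0 : b ≠ 0) :
    a * ((ρ : ℂ) * (Complex.exp ((t:ℂ) * Complex.I) * Complex.I)) +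
      b * (starRingEnd ℂ) ((ρ : ℂ) * (Complex.exp ((t:ℂ) * Complex.I) * Complex.I))
    = -((ρ:ℂ) * Complex.I * b) * Complex.exp (((-1 * t : ℝ):ℂ) * Complex.I) *
        (1 - a / b * Complex.exp (((-2 * -1 * t : ℝ):ℂ) * Complex.I)) := by
  have hconj : (starRingEnd ℂ) (Complex.exp ((t : ℂ) * Complex.I))
      = Complex.exp (-((t : ℂ) * Complex.I)) := by
    rw [← Complex.exp_conj]; congr 1; simp [Complex.conj_I]
  have hE1 : Complex.exp (((-1 * t : ℝ) : ℂ) * Complex.I)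
      = Complex.exp (-((t : ℂ) * Complex.I)) := by congr 1; push_cast; ring
  have hE2 : Complex.exp (((-2 * -1 * t : ℝ) : ℂ) * Complex.I)
      = Complex.exp ((t : ℂ) * Complex.I) * Complex.exp ((t : ℂ) * Complex.I) := by
    rw [← Complex.exp_add]; congr 1; push_cast; ring
  have hinv : Complex.exp (-((t : ℂ) * Complex.I)) * Complex.exp ((t : ℂ) * Complex.I) = 1 := by
    rw [← Complex.exp_add]; simp
  simp only [map_mul, Complex.conj_ofReal, Complex.conj_I]
  rw [hconj, hE1, hE2]
  field_simp
  ring_nf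
  linear_combination (-((ρ:ℂ) * a * Complex.exp ((t:ℂ) * Complex.I))) * hinv

private lemma circle_affine_pos (a b : ℂ) (ρ t : ℝ) (ha0 : a ≠ 0) :
    a * ((ρ : ℂ) * (Complex.exp ((t:ℂ) * Complex.I) * Complex.I)) +
      b * (starRingEnd ℂ) ((ρ : ℂ) * (Complex.exp ((t:ℂ) * Complex.I) * Complex.I))
    = ((ρ:ℂ) * Complex.I * a) * Complex.exp (((1 * t : ℝ):ℂ) * Complex.I) *
        (1 - b / a * Complex.exp (((-2 * 1 * t : ℝ):ℂ) * Complex.I)) := by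
  have hconj : (starRingEnd ℂ) (Complex.exp ((t : ℂ) * Complex.I))
      = Complex.exp (-((t : ℂ) * Complex.I)) := by
    rw [← Complex.exp_conj]; congr 1; simp [Complex.conj_I]
  have hE1 : Complex.exp (((1 * t : ℝ) : ℂ) * Complex.I)
      = Complex.exp ((t : ℂ) * Complex.I) := by congr 1; push_cast; ring
  have hE2 : Complex.exp (((-2 * 1 * t : ℝ) : ℂ) * Complex.I)
      = Complex.exp (-((t : ℂ) * Complex.I)) * Complex.exp (-((t : ℂ) * Complex.I)) := by
    rw [← Complex.exp_add]; congr 1; push_cast; ring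
  have hinv : Complex.exp (-((t : ℂ) * Complex.I)) * Complex.exp ((t : ℂ) * Complex.I) = 1 := by
    rw [← Complex.exp_add]; simp
  simp only [map_mul, Complex.conj_ofReal, Complex.conj_I]
  rw [hconj, hE1, hE2]
  field_simp
  ring_nf
  linear_combination ((ρ:ℂ) * b * Complex.exp (-((t:ℂ) * Complex.I))) * hinv

/-- If `F : ℝ² → ℝ²` (identified with `ℂ`) is `C¹` and `det DF(p) ≠ 0`, then
images under `F` of sufficiently small positively oriented circles around `p`
are regular closed curves of rotation number `sgn (det DF(p))`. -/
theorem stmt_16 (F : ℂ → ℂ) (hF : ContDiff ℝ 1 F) (p : ℂ)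
    (hp : LinearMap.det ((fderiv ℝ F p) : ℂ →ₗ[ℝ] ℂ) ≠ 0) :
    ∃ ρ₀ : ℝ, 0 < ρ₀ ∧ ∀ ρ : ℝ, 0 < ρ → ρ < ρ₀ →
      (∀ t ∈ Icc 0 (2 * π),
        deriv (fun t : ℝ => F (p + (ρ : ℂ) * Complex.exp ((t : ℂ) * Complex.I))) t ≠ 0) ∧
      ∀ θ : ℝ → ℝ, ContinuousOn θ (Icc 0 (2 * π)) →
        (∀ t ∈ Icc 0 (2 * π),
          deriv (fun t : ℝ => F (p + (ρ : ℂ) * Complex.exp ((t : ℂ) * Complex.I))) t =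
            (‖deriv (fun t : ℝ => F (p + (ρ : ℂ) * Complex.exp ((t : ℂ) * Complex.I))) t‖ : ℂ) *
              Complex.exp ((θ t : ℂ) * Complex.I)) →
        θ (2 * π) - θ 0 = 2 * π * Real.sign (LinearMap.det ((fderiv ℝ F p) : ℂ →ₗ[ℝ] ℂ)) := by
  have hpi := Real.pi_pos
  set A : ℂ →L[ℝ] ℂ := fderiv ℝ F p with hA
  set a : ℂ := (A 1 - Complex.I * A Complex.I) / 2 with ha
  set b : ℂ := (A 1 + Complex.I * A Complex.I) / 2 with hb
  have hAz : ∀ z : ℂ, A z = a * z + b * (starRingEnd ℂ) z := by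
    intro z
    have := linmap_decomp (A : ℂ →ₗ[ℝ] ℂ) z
    simpa [ha, hb] using this
  have hA1 : ((A : ℂ →ₗ[ℝ] ℂ)) 1 = a + b := by
    simp only [ContinuousLinearMap.coe_coe, ha, hb]; ring
  have hAI : ((A : ℂ →ₗ[ℝ] ℂ)) Complex.I = (a - b) * Complex.I := by
    simp only [ContinuousLinearMap.coe_coe, ha, hb]
    linear_combination (A Complex.I) * Complex.I_mul_I
  have hdet : LinearMap.det ((A : ℂ →L[ℝ] ℂ) : ℂ →ₗ[ℝ] ℂ)
      = Complex.normSq a - Complex.normSq b := by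
    rw [linmap_det, hA1, hAI]
    simp [Complex.normSq_apply, Complex.add_re, Complex.add_im, Complex.mul_re, Complex.mul_im,
      Complex.sub_re, Complex.sub_im, Complex.I_re, Complex.I_im]
    ring
  have habne : ‖a‖ ≠ ‖b‖ := by
    intro h
    apply hp
    rw [hdet, ← Complex.sq_norm, ← Complex.sq_norm, h, sub_self]
  set k : ℝ := |‖a‖ - ‖b‖| with hk
  have hkpos : 0 < k := abs_pos.mpr (sub_ne_zero.mpr habne)
  have hlow : ∀ z : ℂ, k * ‖z‖ ≤ ‖A z‖ := by
    intro z
    have h2 := abs_norm_sub_norm_le (a * z) (-(b * (starRingEnd ℂ) z))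
    rw [norm_neg, sub_neg_eq_add, ← hAz z] at h2
    calc k * ‖z‖ = |‖a‖ - ‖b‖| * ‖z‖ := by
          rw [hk]
      _ = |‖a * z‖ - ‖b * (starRingEnd ℂ) z‖| := by
          rw [norm_mul, norm_mul, Complex.norm_conj, ← sub_mul, abs_mul,
            abs_of_nonneg (norm_nonneg z)]
      _ ≤ ‖A z‖ := by simpa using h2
  have hDFc : Continuous (fderiv ℝ F) := hF.continuous_fderiv one_ne_zero
  obtain ⟨δ, hδpos, hδ⟩ := Metric.continuousAt_iff.mp (hDFc.continuousAt (x := p)) k hkpos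
  refine ⟨δ, hδpos, ?_⟩
  intro ρ hρ hρδ
  have hxd : ∀ t : ℝ, HasDerivAt (fun s : ℝ => p + (ρ : ℂ) * Complex.exp ((s : ℂ) * Complex.I))
      ((ρ : ℂ) * (Complex.exp ((t : ℂ) * Complex.I) * Complex.I)) t := by
    intro t
    have h1 : HasDerivAt (fun s : ℝ => ((s : ℂ))) 1 t := by
      simpa using (hasDerivAt_id t).ofReal_comp
    have h2 := h1.mul_const Complex.I
    have h3 := h2.cexp
    have h4 := (h3.const_mul ((ρ : ℂ))).const_add p
    simpa using h4
  set u : ℝ → ℂ := deriv (fun t : ℝ => F (p + (ρ : ℂ) * Complex.exp ((t : ℂ) * Complex.I)))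
    with hu
  have hu_eq : ∀ t : ℝ,
      u t = (fderiv ℝ F (p + (ρ : ℂ) * Complex.exp ((t : ℂ) * Complex.I)))
            ((ρ : ℂ) * (Complex.exp ((t : ℂ) * Complex.I) * Complex.I)) := by
    intro t
    have hd : HasFDerivAt F (fderiv ℝ F (p + (ρ : ℂ) * Complex.exp ((t : ℂ) * Complex.I)))
        (p + (ρ : ℂ) * Complex.exp ((t : ℂ) * Complex.I)) :=
      ((hF.differentiable one_ne_zero) _).hasFDerivAt
    exact (hd.comp_hasDerivAt t (hxd t)).deriv
  obtain ⟨ε, c, r, hεone, hrlt, hsgn, hAv⟩ :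
      ∃ (ε : ℝ) (c r : ℂ), (ε = 1 ∨ ε = -1) ∧ ‖r‖ < 1 ∧
        Real.sign (LinearMap.det ((A : ℂ →L[ℝ] ℂ) : ℂ →ₗ[ℝ] ℂ)) = ε ∧
        ∀ t : ℝ, A ((ρ : ℂ) * (Complex.exp ((t : ℂ) * Complex.I) * Complex.I))
          = c * Complex.exp (((ε * t : ℝ) : ℂ) * Complex.I) *
              (1 - r * Complex.exp (((-2 * ε * t : ℝ) : ℂ) * Complex.I)) := by
    rcases lt_or_gt_of_ne habne with hcase | hcase
    · -- |a| < |b| : orientation reversing, ε = -1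
      have hb0 : b ≠ 0 := by
        intro h
        rw [h, norm_zero] at hcase
        exact absurd hcase (not_lt.2 (norm_nonneg a))
      refine ⟨-1, -((ρ : ℂ) * Complex.I * b), a / b, Or.inr rfl, ?_, ?_, ?_⟩
      · rw [norm_div, div_lt_one (norm_pos_iff.mpr hb0)]; exact hcase
      · rw [hdet, Real.sign_of_neg]
        rw [sub_neg, ← Complex.sq_norm, ← Complex.sq_norm]
        exact pow_lt_pow_left₀ hcase (norm_nonneg a) two_ne_zero
      · intro t
        rw [hAz]
        exact circle_affine_neg a b ρ t hb0
    · -- |a| > |b| : orientation preserving, ε = 1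
      have ha0 : a ≠ 0 := by
        intro h
        rw [h, norm_zero] at hcase
        exact absurd hcase (not_lt.2 (norm_nonneg b))
      refine ⟨1, (ρ : ℂ) * Complex.I * a, b / a, Or.inl rfl, ?_, ?_, ?_⟩
      · rw [norm_div, div_lt_one (norm_pos_iff.mpr ha0)]; exact hcase
      · rw [hdet, Real.sign_of_pos]
        rw [sub_pos, ← Complex.sq_norm, ← Complex.sq_norm]
        exact pow_lt_pow_left₀ hcase (norm_nonneg b) two_ne_zero
      · intro t
        rw [hAz]
        exact circle_affine_pos a b ρ t ha0
  set v : ℝ → ℂ := fun t => c * Complex.exp (((ε * t : ℝ) : ℂ) * Complex.I) *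
      (1 - r * Complex.exp (((-2 * ε * t : ℝ) : ℂ) * Complex.I)) with hv
  obtain ⟨hθvc, hθv'⟩ := model_lift c r hrlt ε
  set θv : ℝ → ℝ := fun t => ε * t + Complex.arg c +
      Complex.arg (1 - r * Complex.exp (((-2 * ε * t : ℝ) : ℂ) * Complex.I)) with hθv
  have hxdist : ∀ t : ℝ, dist (p + (ρ : ℂ) * Complex.exp ((t : ℂ) * Complex.I)) p < δ := by
    intro t
    rw [dist_self_add_left, norm_mul, Complex.norm_real,
      Real.norm_eq_abs, Complex.norm_exp_ofReal_mul_I, mul_one, abs_of_pos hρ]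
    exact hρδ
  have hwnorm : ∀ t : ℝ, ‖(ρ : ℂ) * (Complex.exp ((t : ℂ) * Complex.I) * Complex.I)‖ = ρ := by
    intro t
    simp [Complex.norm_exp_ofReal_mul_I,
      abs_of_pos hρ]
  have hlt : ∀ t ∈ Icc 0 (2 * π), ‖u t - v t‖ < ‖v t‖ := by
    intro t _
    have hdiff : u t - v t
        = (fderiv ℝ F (p + (ρ : ℂ) * Complex.exp ((t : ℂ) * Complex.I)) - A)
            ((ρ : ℂ) * (Complex.exp ((t : ℂ) * Complex.I) * Complex.I)) := by
      rw [ContinuousLinearMap.sub_apply, hu_eq t, hAv t]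
    have h1 : ‖u t - v t‖
        ≤ ‖fderiv ℝ F (p + (ρ : ℂ) * Complex.exp ((t : ℂ) * Complex.I)) - A‖ * ρ := by
      rw [hdiff]
      calc ‖_‖ ≤ ‖fderiv ℝ F (p + (ρ : ℂ) * Complex.exp ((t : ℂ) * Complex.I)) - A‖ *
            ‖(ρ : ℂ) * (Complex.exp ((t : ℂ) * Complex.I) * Complex.I)‖ :=
          ContinuousLinearMap.le_opNorm _ _
        _ = _ := by rw [hwnorm]
    have h2 : ‖fderiv ℝ F (p + (ρ : ℂ) * Complex.exp ((t : ℂ) * Complex.I)) - A‖ < k := by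
      have h := hδ (hxdist t)
      rwa [dist_eq_norm] at h
    have h3 : k * ρ ≤ ‖v t‖ := by
      have h := hlow ((ρ : ℂ) * (Complex.exp ((t : ℂ) * Complex.I) * Complex.I))
      rw [hwnorm, hAv t] at h
      exact h
    calc ‖u t - v t‖ ≤ _ * ρ := h1
      _ < k * ρ := mul_lt_mul_of_pos_right h2 hρ
      _ ≤ ‖v t‖ := h3
  have hne : ∀ t ∈ Icc 0 (2 * π), u t ≠ 0 := by
    intro t ht h0
    have h := hlt t ht
    rw [h0, zero_sub, norm_neg] at h
    exact lt_irrefl _ h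
  refine ⟨hne, ?_⟩
  intro θ hθc hθeq
  have hper2π : Complex.exp (((2 * π : ℝ) : ℂ) * Complex.I) = 1 :=
    exp_one_of_two_pi_multiple 1 _ (by push_cast; ring)
  have hper0 : Complex.exp (((0 : ℝ) : ℂ) * Complex.I) = 1 :=
    exp_one_of_two_pi_multiple 0 _ (by push_cast; ring)
  have huT : u (2 * π) = u 0 := by rw [hu_eq, hu_eq, hper2π, hper0]
  have hperv2 : Complex.exp (((ε * (2 * π) : ℝ) : ℂ) * Complex.I) = 1 := by
    rcases hεone with h | h <;> subst h
    · exact exp_one_of_two_pi_multiple 1 _ (by push_cast; ring)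
    · exact exp_one_of_two_pi_multiple (-1) _ (by push_cast; ring)
  have hperv0 : Complex.exp (((ε * 0 : ℝ) : ℂ) * Complex.I) = 1 :=
    exp_one_of_two_pi_multiple 0 _ (by push_cast; ring)
  have hperw2 : Complex.exp (((-2 * ε * (2 * π) : ℝ) : ℂ) * Complex.I) = 1 := by
    rcases hεone with h | h <;> subst h
    · exact exp_one_of_two_pi_multiple (-2) _ (by push_cast; ring)
    · exact exp_one_of_two_pi_multiple 2 _ (by push_cast; ring)
  have hperw0 : Complex.exp (((-2 * ε * 0 : ℝ) : ℂ) * Complex.I) = 1 :=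
    exp_one_of_two_pi_multiple 0 _ (by push_cast; ring)
  have hvT : v (2 * π) = v 0 := by
    simp only [hv]
    rw [hperv2, hperv0, hperw2, hperw0]
  have hufun : u = fun t : ℝ => (fderiv ℝ F (p + (ρ : ℂ) * Complex.exp ((t : ℂ) * Complex.I)))
      ((ρ : ℂ) * (Complex.exp ((t : ℂ) * Complex.I) * Complex.I)) := funext hu_eq
  have hucont : ContinuousOn u (Icc 0 (2 * π)) := by
    rw [hufun]
    refine Continuous.continuousOn (Continuous.clm_apply ?_ ?_)
    · exact hDFc.comp (by fun_prop)
    · fun_prop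
  have hvcont : ContinuousOn v (Icc 0 (2 * π)) := by
    refine Continuous.continuousOn ?_
    rw [hv]
    fun_prop
  have key := winding_compare (2 * π) (by positivity) u v θ θv hucont hvcont hθc
    hθvc.continuousOn hlt huT hvT hθeq (fun t _ => hθv' t)
  have hargw : Complex.arg (1 - r * Complex.exp (((-2 * ε * (2 * π) : ℝ) : ℂ) * Complex.I))
      = Complex.arg (1 - r * Complex.exp (((-2 * ε * 0 : ℝ) : ℂ) * Complex.I)) := by
    rw [hperw2, hperw0]
  have hdiffv : θv (2 * π) - θv 0 = ε * (2 * π) := by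
    simp only [hθv]
    rw [hargw]
    ring
  rw [key, hdiffv, hsgn]
  ring
end
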